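/- Let μ₁,μ₂ ∈ ℝ with μ₂ < 0, r ∈ ℝ with rμ₂ − μ₁ > 0 and (r²−1)μ₂ − 2rμ₁ > 0. Define h(θ₁) = −rθ₁ + μ₂ + √((μ₁²+μ₂²) − (θ₁+μ₁)²) and θ₁ᵖ = 2(rμ₂ − μ₁)/(r²+1). Then h(θ₁ᵖ) = 0 and h'(θ₁ᵖ) = (1+r²)(μ₁ − rμ₂)/((r²−1)μ₂ − 2rμ₁). -/

import Mathlib

/-- `h(θ₁ᵖ) = 0` and `h'(θ₁ᵖ) = (1+r²)(μ₁ − rμ₂)/((r²−1)μ₂ − 2rμ₁)`. -/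
theorem stmt_6 (μ₁ μ₂ r : ℝ) (hμ₂ : μ₂ < 0) (hr : r * μ₂ - μ₁ > 0)
    (hpole : (r ^ 2 - 1) * μ₂ - 2 * r * μ₁ > 0) :
    (fun θ₁ : ℝ => -r * θ₁ + μ₂ + Real.sqrt ((μ₁ ^ 2 + μ₂ ^ 2) - (θ₁ + μ₁) ^ 2))
      (2 * (r * μ₂ - μ₁) / (r ^ 2 + 1)) = 0 ∧
    HasDerivAt (fun θ₁ : ℝ => -r * θ₁ + μ₂ + Real.sqrt ((μ₁ ^ 2 + μ₂ ^ 2) - (θ₁ + μ₁) ^ 2))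
      ((1 + r ^ 2) * (μ₁ - r * μ₂) / ((r ^ 2 - 1) * μ₂ - 2 * r * μ₁))
      (2 * (r * μ₂ - μ₁) / (r ^ 2 + 1)) := by
  set θp : ℝ := 2 * (r * μ₂ - μ₁) / (r ^ 2 + 1) with hθp
  have hp : (0:ℝ) < r ^ 2 + 1 := by positivity
  set s : ℝ := ((r ^ 2 - 1) * μ₂ - 2 * r * μ₁) / (r ^ 2 + 1) with hs
  have hs0 : 0 < s := div_pos hpole hp
  have hinner : (μ₁ ^ 2 + μ₂ ^ 2) - (θp + μ₁) ^ 2 = s ^ 2 := by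
    rw [hθp, hs]
    field_simp
    ring
  have hsqrt : Real.sqrt ((μ₁ ^ 2 + μ₂ ^ 2) - (θp + μ₁) ^ 2) = s := by
    rw [hinner, Real.sqrt_sq hs0.le]
  constructor
  · show -r * θp + μ₂ + Real.sqrt ((μ₁ ^ 2 + μ₂ ^ 2) - (θp + μ₁) ^ 2) = 0
    rw [hsqrt, hθp, hs]
    field_simp
    ring
  · have hne : (μ₁ ^ 2 + μ₂ ^ 2) - (θp + μ₁) ^ 2 ≠ 0 := by
      rw [hinner]; positivity
    have hf : HasDerivAt (fun θ : ℝ => (μ₁ ^ 2 + μ₂ ^ 2) - (θ + μ₁) ^ 2)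
        (-(2 * (θp + μ₁))) θp := by
      have h1 := ((hasDerivAt_id θp).add_const μ₁).pow 2
      have h2 := h1.const_sub (μ₁ ^ 2 + μ₂ ^ 2)
      convert h2 using 1
      iterate 3 rfl
      simp
    have h1 := (Real.hasDerivAt_sqrt hne).comp θp hf
    have h2 := (((hasDerivAt_id θp).const_mul (-r)).add_const μ₂).add h1
    convert h2 using 1
    iterate 3 rfl
    rw [Function.comp_def] at *
    rw [hsqrt]
    have hden : (r ^ 2 - 1) * μ₂ - 2 * r * μ₁ ≠ 0 := ne_of_gt hpole
    rw [hθp, hs]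
    field_simp
    have hden' : μ₂ * (r ^ 2 - 1) - r * μ₁ * 2 ≠ 0 := by intro h; apply hden; linarith
    field_simp
    ring
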